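/- Let p = x₁ + iy₁, q = x₂ + iy₂, and s = x + iy be points of the upper half-plane ℍ, and let 0 < α < π. Then the hyperbolic cosine rule cosh(d_ℍ(p,q)) = cosh(d_ℍ(p,s))·cosh(d_ℍ(q,s)) − sinh(d_ℍ(p,s))·sinh(d_ℍ(q,s))·cos(α) holds if and only if φ̃_{p,q,α}(s) = 0. (This is the characterization of the isoptic curve C_α(p,q) in the upper half-plane model.) -/

import Mathlib

open UpperHalfPlane

/-- The isoptic-curve expression `φ̃_{p,q,α}(s)` in the upper half-plane model, for
`p = x₁ + iy₁`, `q = x₂ + iy₂`, `s = x + iy`. -/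
noncomputable def phiUH (p q : UpperHalfPlane) (α : ℝ) (s : UpperHalfPlane) : ℝ :=
  ((p.re - s.re) ^ 2 + p.im ^ 2 + s.im ^ 2) * ((q.re - s.re) ^ 2 + q.im ^ 2 + s.im ^ 2)
    - 2 * s.im ^ 2 * ((p.re - q.re) ^ 2 + p.im ^ 2 + q.im ^ 2)
    - Real.cos α * Real.sqrt
        (((p.re - s.re) ^ 2 + (p.im - s.im) ^ 2) * ((p.re - s.re) ^ 2 + (p.im + s.im) ^ 2) *
          ((q.re - s.re) ^ 2 + (q.im - s.im) ^ 2) * ((q.re - s.re) ^ 2 + (q.im + s.im) ^ 2))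

lemma sinh_dist' (z w : UpperHalfPlane) :
    Real.sinh (dist z w) =
      dist (z : ℂ) w * dist (z : ℂ) (starRingEnd ℂ w) / (2 * z.im * w.im) := by
  have h : dist z w = 2 * (dist z w / 2) := by ring
  rw [h, Real.sinh_two_mul, UpperHalfPlane.sinh_half_dist, UpperHalfPlane.cosh_half_dist]
  set r := Real.sqrt (z.im * w.im) with hr
  have him : r ^ 2 = z.im * w.im := Real.sq_sqrt (by positivity)
  have hz : r > 0 := Real.sqrt_pos.2 (by positivity)
  have h0 : z.im > 0 := z.im_pos
  have h1 : w.im > 0 := w.im_pos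
  field_simp
  linear_combination (-1 * dist (z:ℂ) w * dist (z:ℂ) (starRingEnd ℂ (w:ℂ))) * him

lemma dist_sq_coe (z w : UpperHalfPlane) :
    dist (z : ℂ) (w : ℂ) ^ 2 = (z.re - w.re) ^ 2 + (z.im - w.im) ^ 2 := by
  rw [Complex.dist_eq, Complex.sq_norm, Complex.normSq_apply]
  simp [UpperHalfPlane.coe_re, UpperHalfPlane.coe_im]
  ring

lemma dist_sq_conj (z w : UpperHalfPlane) :
    dist (z : ℂ) (starRingEnd ℂ (w : ℂ)) ^ 2 = (z.re - w.re) ^ 2 + (z.im + w.im) ^ 2 := by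
  rw [Complex.dist_eq, Complex.sq_norm, Complex.normSq_apply]
  simp [UpperHalfPlane.coe_re, UpperHalfPlane.coe_im, Complex.sub_re, Complex.sub_im]
  ring

/-- Characterization of the isoptic curve `C_α(p,q)` in the upper half-plane model:
the hyperbolic cosine rule at `s` with angle `α` holds iff `φ̃_{p,q,α}(s) = 0`. -/
theorem isoptic_curve_upperHalfPlane (p q s : UpperHalfPlane)
    (α : ℝ) (hα₀ : 0 < α) (hαπ : α < Real.pi) :
    (Real.cosh (dist p q)
        = Real.cosh (dist p s) * Real.cosh (dist q s)
          - Real.sinh (dist p s) * Real.sinh (dist q s) * Real.cos α)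
      ↔ phiUH p q α s = 0 := by
  have hpi := p.im_pos
  have hqi := q.im_pos
  have hsi := s.im_pos
  have hA2 := dist_sq_coe p s
  have hB2 := dist_sq_coe q s
  have hC2 := dist_sq_coe p q
  have hA'2 := dist_sq_conj p s
  have hB'2 := dist_sq_conj q s
  have hsqrt : Real.sqrt
        (((p.re - s.re) ^ 2 + (p.im - s.im) ^ 2) * ((p.re - s.re) ^ 2 + (p.im + s.im) ^ 2) *
          ((q.re - s.re) ^ 2 + (q.im - s.im) ^ 2) * ((q.re - s.re) ^ 2 + (q.im + s.im) ^ 2))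
      = dist (p:ℂ) s * dist (p:ℂ) (starRingEnd ℂ (s:ℂ)) * dist (q:ℂ) s
          * dist (q:ℂ) (starRingEnd ℂ (s:ℂ)) := by
    rw [← hA2, ← hA'2, ← hB2, ← hB'2,
      show dist (p:ℂ) s ^ 2 * dist (p:ℂ) (starRingEnd ℂ (s:ℂ)) ^ 2 * dist (q:ℂ) s ^ 2
          * dist (q:ℂ) (starRingEnd ℂ (s:ℂ)) ^ 2
        = (dist (p:ℂ) s * dist (p:ℂ) (starRingEnd ℂ (s:ℂ)) * dist (q:ℂ) s
            * dist (q:ℂ) (starRingEnd ℂ (s:ℂ))) ^ 2 from by ring,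
      Real.sqrt_sq (by positivity)]
  have e1 : (p.re - s.re) ^ 2 + p.im ^ 2 + s.im ^ 2
      = dist (p:ℂ) s ^ 2 + 2 * p.im * s.im := by rw [hA2]; ring
  have e2 : (q.re - s.re) ^ 2 + q.im ^ 2 + s.im ^ 2
      = dist (q:ℂ) s ^ 2 + 2 * q.im * s.im := by rw [hB2]; ring
  have e3 : (p.re - q.re) ^ 2 + p.im ^ 2 + q.im ^ 2
      = dist (p:ℂ) q ^ 2 + 2 * p.im * q.im := by rw [hC2]; ring
  have key : phiUH p q α s = (4 * p.im * q.im * s.im ^ 2) *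
      ((Real.cosh (dist p s) * Real.cosh (dist q s)
          - Real.sinh (dist p s) * Real.sinh (dist q s) * Real.cos α)
        - Real.cosh (dist p q)) := by
    rw [phiUH, e1, e2, e3, hsqrt, UpperHalfPlane.cosh_dist, UpperHalfPlane.cosh_dist,
      UpperHalfPlane.cosh_dist, sinh_dist', sinh_dist']
    field_simp
    ring
  constructor
  · intro h
    rw [key, h]; ring
  · intro h
    rw [key] at h
    have hc : (4 * p.im * q.im * s.im ^ 2) ≠ 0 := by positivity
    have := (mul_eq_zero.1 h).resolve_left hc
    linarith [sub_eq_zero.1 this]
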